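/- Let r ∈ ℕ⁺, k ∈ {0,1,…,r}, and θ₁,…,θ_r ∈ {0,1}. With δ = 2^{−r}, T(x) = σ(x/δ+1) − σ(x/δ), and β_i = ∑_{j=i}^{r} θ_j 2^{−(j−i+1)}, one has ∑_{i=1}^{k} θ_i = ∑_{i=1}^{r} σ( T(β_i − 1/2) + T(k − i) − 1 ), where σ is ReLU. -/
import Mathlib

private lemma geo_half (m r : ℕ) : ∑ j ∈ Finset.Icc m r, ((1:ℝ)/2) ^ (j - m + 1)
    = 1 - (1/2) ^ (r + 1 - m) := by
  rcases le_or_gt m r with h | h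
  · rw [← Finset.Ico_add_one_right_eq_Icc, Finset.sum_Ico_eq_sum_range]
    rw [show r + 1 - m = r + 1 - m from rfl]
    calc ∑ i ∈ Finset.range (r + 1 - m), ((1:ℝ)/2) ^ (m + i - m + 1)
        = ∑ i ∈ Finset.range (r + 1 - m), (1/2) * ((1:ℝ)/2) ^ i := by
          apply Finset.sum_congr rfl
          intro i _
          rw [Nat.add_sub_cancel_left, pow_succ, mul_comm]
      _ = (1/2) * ((((1:ℝ)/2) ^ (r + 1 - m) - 1) / (1/2 - 1)) := by
          rw [← Finset.mul_sum, geom_sum_eq (by norm_num)]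
      _ = 1 - (1/2) ^ (r + 1 - m) := by ring
  · rw [Finset.Icc_eq_empty (by omega), Finset.sum_empty]
    rw [show r + 1 - m = 0 by omega]
    norm_num

theorem stmt_17 (r : ℕ) (hr : 0 < r) (k : ℕ) (hk : k ≤ r) (θ : ℕ → ℝ)
    (hθ : ∀ j, 1 ≤ j → j ≤ r → θ j = 0 ∨ θ j = 1) :
    (let δ : ℝ := 1 / 2 ^ r
     let T : ℝ → ℝ := fun x => max 0 (x / δ + 1) - max 0 (x / δ)
     let β : ℕ → ℝ := fun m => ∑ j ∈ Finset.Icc m r, θ j / 2 ^ (j - m + 1)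
     (∑ i ∈ Finset.Icc 1 k, θ i)
       = ∑ i ∈ Finset.Icc 1 r, max 0 (T (β i - 1/2) + T ((k : ℝ) - i) - 1)) := by
  intro δ T β
  have hδpos : (0:ℝ) < δ := by positivity
  have hδeq : δ = ((1:ℝ)/2)^r := by
    show (1:ℝ)/2^r = _
    rw [div_pow, one_pow]
  have hδle : δ ≤ 1/2 := by
    rw [hδeq]
    calc ((1:ℝ)/2)^r ≤ (1/2)^1 :=
          pow_le_pow_of_le_one (by norm_num) (by norm_num) hr
      _ = 1/2 := pow_one _
  have hTpos : ∀ x : ℝ, 0 ≤ x → T x = 1 := by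
    intro x hx
    have h1 : 0 ≤ x / δ := by positivity
    simp only [T]
    rw [max_eq_right (by linarith), max_eq_right h1]
    ring
  have hTneg : ∀ x : ℝ, x ≤ -δ → T x = 0 := by
    intro x hx
    have h1 : x / δ ≤ -1 := by
      rw [div_le_iff₀ hδpos]
      linarith
    simp only [T]
    rw [max_eq_left (by linarith), max_eq_left (by linarith)]
    ring
  have hθ01 : ∀ j, 1 ≤ j → j ≤ r → 0 ≤ θ j ∧ θ j ≤ 1 := by
    intro j h1 h2
    rcases hθ j h1 h2 with h | h <;> rw [h] <;> norm_num
  have hβ1 : ∀ i, 1 ≤ i → i ≤ r → θ i = 1 → (1:ℝ)/2 ≤ β i := by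
    intro i h1 h2 hθi
    have : θ i / 2 ^ (i - i + 1) ≤ β i := by
      apply Finset.single_le_sum (f := fun j => θ j / 2 ^ (j - i + 1))
      · intro j hj
        simp only [Finset.mem_Icc] at hj
        have := hθ01 j (le_trans h1 hj.1) hj.2
        apply div_nonneg this.1
        positivity
      · simp only [Finset.mem_Icc]; omega
    rw [hθi, Nat.sub_self] at this
    norm_num at this
    linarith
  have hβ0 : ∀ i, 1 ≤ i → i ≤ r → θ i = 0 → β i ≤ 1/2 - δ := by
    intro i h1 h2 hθi
    have hsplit : β i = θ i / 2 ^ (i - i + 1) + ∑ j ∈ Finset.Icc (i+1) r, θ j / 2 ^ (j - i + 1) := by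
      show ∑ j ∈ Finset.Icc i r, θ j / 2 ^ (j - i + 1) = _
      rw [show Finset.Icc i r = insert i (Finset.Icc (i+1) r) by
        ext x; simp only [Finset.mem_insert, Finset.mem_Icc]; omega]
      rw [Finset.sum_insert (by simp only [Finset.mem_Icc]; omega)]
    rw [hsplit, hθi]
    have hbound : ∑ j ∈ Finset.Icc (i+1) r, θ j / 2 ^ (j - i + 1)
        ≤ ∑ j ∈ Finset.Icc (i+1) r, ((1:ℝ)/2) ^ (j - (i+1) + 1 + 1) := by
      apply Finset.sum_le_sum
      intro j hj
      simp only [Finset.mem_Icc] at hj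
      have h01 := hθ01 j (by omega) hj.2
      rw [show j - (i+1) + 1 + 1 = j - i + 1 by omega]
      rw [div_pow, one_pow]
      rw [div_le_div_iff₀ (by positivity) (by positivity)]
      nlinarith [h01.1, h01.2, pow_pos (show (0:ℝ) < 2 by norm_num) (j - i + 1)]
    have hgeo : ∑ j ∈ Finset.Icc (i+1) r, ((1:ℝ)/2) ^ (j - (i+1) + 1 + 1)
        = (1/2) * (1 - (1/2) ^ (r + 1 - (i+1))) := by
      calc ∑ j ∈ Finset.Icc (i+1) r, ((1:ℝ)/2) ^ (j - (i+1) + 1 + 1)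
          = ∑ j ∈ Finset.Icc (i+1) r, (1/2) * ((1:ℝ)/2) ^ (j - (i+1) + 1) := by
            apply Finset.sum_congr rfl; intro j _; rw [pow_succ, mul_comm]
        _ = (1/2) * (1 - (1/2) ^ (r + 1 - (i+1))) := by
            rw [← Finset.mul_sum, geo_half]
    have hexp : ((1:ℝ)/2) * (1 - (1/2) ^ (r + 1 - (i+1))) ≤ 1/2 - δ := by
      have : δ ≤ (1/2) * ((1:ℝ)/2) ^ (r + 1 - (i+1)) := by
        rw [hδeq, ← pow_succ']
        exact pow_le_pow_of_le_one (by norm_num) (by norm_num) (by omega)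
      linarith
    calc (0:ℝ) / 2 ^ (i - i + 1) + ∑ j ∈ Finset.Icc (i+1) r, θ j / 2 ^ (j - i + 1)
        ≤ 0 + (1/2) * (1 - (1/2) ^ (r + 1 - (i+1))) := by
          rw [← hgeo]; gcongr; norm_num
      _ ≤ 1/2 - δ := by linarith
  have key : ∀ i ∈ Finset.Icc 1 r,
      max 0 (T (β i - 1/2) + T ((k : ℝ) - i) - 1) = if i ≤ k then θ i else 0 := by
    intro i hi
    simp only [Finset.mem_Icc] at hi
    have hT2 : T ((k : ℝ) - i) = if i ≤ k then 1 else 0 := by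
      by_cases h : i ≤ k
      · rw [if_pos h]
        apply hTpos
        have : (i:ℝ) ≤ k := by exact_mod_cast h
        linarith
      · rw [if_neg h]
        apply hTneg
        have : (k:ℝ) + 1 ≤ i := by exact_mod_cast (by omega : k + 1 ≤ i)
        linarith
    rcases hθ i hi.1 hi.2 with h0 | h1
    · have hT1 : T (β i - 1/2) = 0 := by
        apply hTneg
        have := hβ0 i hi.1 hi.2 h0
        linarith
      rw [hT1, hT2]
      by_cases h : i ≤ k <;> simp [h, h0] <;> norm_num
    · have hT1 : T (β i - 1/2) = 1 := by
        apply hTpos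
        have := hβ1 i hi.1 hi.2 h1
        linarith
      rw [hT1, hT2]
      by_cases h : i ≤ k <;> simp [h, h1] <;> norm_num
  rw [Finset.sum_congr rfl key, ← Finset.sum_filter]
  congr 1
  ext x
  simp only [Finset.mem_filter, Finset.mem_Icc]
  omega
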